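/- Let E and F be Banach lattices and let (Kₙ)_{n∈ℕ} be a sequence of positive bounded linear operators from E to F that is decreasing on the positive cone: 0 ≤ K_{n+1} x ≤ Kₙ x for every x ≥ 0 and every n. Suppose that for every x ≥ 0 the sequence (Kₙ x) converges weakly to 0, i.e., φ(Kₙ x) → 0 for every continuous linear functional φ on F. Then for every x ∈ E (not just positive x) one has ‖Kₙ x‖ → 0. -/

import Mathlib

open Filter Topology

/-- In a normed lattice group with a real module structure (continuous scalar action),
nonnegative scalars preserve the positive cone. -/
lemma aux_real_smul_nonneg {F : Type*}
    [NormedAddCommGroup F] [Lattice F] [HasSolidNorm F] [IsOrderedAddMonoid F] [NormedSpace ℝ F]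
    {c : ℝ} (hc : 0 ≤ c) {v : F} (hv : 0 ≤ v) : 0 ≤ c • v := by
  -- natural number scalars
  have hnat : ∀ m : ℕ, 0 ≤ (m : ℝ) • v := fun m => by
    rw [Nat.cast_smul_eq_nsmul]; exact nsmul_nonneg hv m
  -- dyadic scalars m / 2^k
  have hdy : ∀ m k : ℕ, 0 ≤ ((m : ℝ) / 2 ^ k) • v := by
    intro m k
    induction k with
    | zero => simpa using hnat m
    | succ k ih =>
      apply nsmul_two_semiclosed
      have h2 : (2 : ℕ) • (((m : ℝ) / 2 ^ (k + 1)) • v) = ((m : ℝ) / 2 ^ k) • v := by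
        rw [← Nat.cast_smul_eq_nsmul ℝ, smul_smul]
        congr 1
        push_cast
        field_simp
        ring
      rw [h2]; exact ih
  -- the set of scalars sending v into the cone is closed
  have hSclosed : IsClosed {c : ℝ | 0 ≤ c • v} := by
    have : {c : ℝ | 0 ≤ c • v} = (fun c : ℝ => c • v) ⁻¹' {x : F | 0 ≤ x} := rfl
    rw [this]
    exact isClosed_nonneg.preimage (continuous_id.smul continuous_const)
  -- approximate c by dyadics from above
  set q : ℕ → ℝ := fun n => (⌈c * 2 ^ n⌉₊ : ℝ) / 2 ^ n with hq
  have hq_mem : ∀ n, 0 ≤ q n • v := fun n => hdy _ n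
  have hpow : ∀ n : ℕ, (0 : ℝ) < 2 ^ n := fun n => by positivity
  have hq_lo : ∀ n, c ≤ q n := by
    intro n
    rw [hq, le_div_iff₀ (hpow n)]
    exact Nat.le_ceil _
  have hq_hi : ∀ n, q n ≤ c + ((1 : ℝ) / 2) ^ n := by
    intro n
    rw [hq, div_le_iff₀ (hpow n)]
    have h1 : (⌈c * 2 ^ n⌉₊ : ℝ) < c * 2 ^ n + 1 :=
      Nat.ceil_lt_add_one (by positivity)
    have : (c + ((1 : ℝ) / 2) ^ n) * 2 ^ n = c * 2 ^ n + 1 := by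
      rw [add_mul, ← mul_pow]; norm_num
    rw [this]
    exact h1.le
  have htend : Tendsto q atTop (𝓝 c) := by
    have hhi : Tendsto (fun n => c + ((1 : ℝ) / 2) ^ n) atTop (𝓝 c) := by
      have h2 : Tendsto (fun n : ℕ => ((1 : ℝ) / 2) ^ n) atTop (𝓝 0) :=
        tendsto_pow_atTop_nhds_zero_of_lt_one (by norm_num) (by norm_num)
      simpa using (tendsto_const_nhds (x := c) (f := (atTop : Filter ℕ))).add h2
    exact tendsto_of_tendsto_of_tendsto_of_le_of_le tendsto_const_nhds hhi hq_lo hq_hi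
  exact hSclosed.mem_of_tendsto htend (Eventually.of_forall hq_mem)

lemma aux_dini {F : Type*}
    [NormedAddCommGroup F] [Lattice F] [HasSolidNorm F] [IsOrderedAddMonoid F] [NormedSpace ℝ F]
    (y : ℕ → F) (hpos : ∀ n, 0 ≤ y n) (hanti : Antitone y)
    (hweak : ∀ φ : F →L[ℝ] ℝ, Tendsto (fun n => φ (y n)) atTop (𝓝 0)) :
    Tendsto (fun n => ‖y n‖) atTop (𝓝 0) := by
  -- 0 is in the norm closure of the convex hull of the range of y (Mazur/Hahn-Banach)
  have h0 : (0 : F) ∈ closure (convexHull ℝ (Set.range y)) := by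
    by_contra h
    obtain ⟨f, u, hf0, hfs⟩ := geometric_hahn_banach_point_closed
      ((convex_convexHull ℝ _).closure) isClosed_closure h
    have hu : (0 : ℝ) < u := by simpa using hf0
    have hun : ∀ n, u < f (y n) := fun n =>
      hfs _ (subset_closure (subset_convexHull ℝ _ ⟨n, rfl⟩))
    obtain ⟨n, hn⟩ := ((hweak f).eventually (eventually_lt_nhds hu)).exists
    exact absurd (hun n) (not_lt.2 hn.le)
  rw [Metric.tendsto_atTop]
  intro ε hε
  obtain ⟨z, hz, hzd⟩ := Metric.mem_closure_iff.1 h0 ε hε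
  rw [dist_zero_left] at hzd
  rw [convexHull_eq] at hz
  obtain ⟨ι, t, w, g, hw0, hw1, hgt, hcm⟩ := hz
  classical
  have hidx : ∀ i ∈ t, ∃ m, y m = g i := fun i hi => hgt i hi
  set idx : ι → ℕ := fun i => if h : i ∈ t then (hidx i h).choose else 0 with hidx_def
  have hidx_eq : ∀ i ∈ t, y (idx i) = g i := by
    intro i hi
    simp only [hidx_def, dif_pos hi]
    exact (hidx i hi).choose_spec
  refine ⟨t.sup idx, fun m hm => ?_⟩
  have hle : y m ≤ z := by
    have hsum : z = ∑ i ∈ t, w i • g i := by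
      rw [← hcm, Finset.centerMass_eq_of_sum_1 _ _ hw1]
    have h1 : y m = ∑ i ∈ t, w i • y m := by
      rw [← Finset.sum_smul, hw1, one_smul]
    rw [h1, hsum]
    refine Finset.sum_le_sum fun i hi => ?_
    have hym : y m ≤ y (idx i) := hanti (le_trans (Finset.le_sup hi) hm)
    rw [← hidx_eq i hi, ← sub_nonneg, ← smul_sub]
    exact aux_real_smul_nonneg (hw0 i hi) (sub_nonneg.2 hym)
  have habs : |y m| ≤ |z| := by
    rw [abs_of_nonneg (hpos m)]
    exact le_trans hle (le_abs_self z)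
  have hnorm : ‖y m‖ ≤ ‖z‖ := HasSolidNorm.solid habs
  rw [Real.dist_eq, sub_zero, abs_of_nonneg (norm_nonneg _)]
  exact lt_of_le_of_lt hnorm hzd

/-- Let `E, F` be Banach lattices and `(Kₙ)` a sequence of positive bounded
operators `E →L[ℝ] F`, decreasing on the positive cone, such that `Kₙ x → 0` weakly for every
`x ≥ 0`. Then `‖Kₙ x‖ → 0` for every `x ∈ E`. -/
theorem stmt_7 {E F : Type*}
    [NormedAddCommGroup E] [Lattice E] [HasSolidNorm E] [IsOrderedAddMonoid E] [NormedSpace ℝ E] [CompleteSpace E]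
    [NormedAddCommGroup F] [Lattice F] [HasSolidNorm F] [IsOrderedAddMonoid F] [NormedSpace ℝ F] [CompleteSpace F]
    (K : ℕ → E →L[ℝ] F)
    (hpos : ∀ n : ℕ, ∀ x : E, 0 ≤ x → 0 ≤ K n x)
    (hdec : ∀ n : ℕ, ∀ x : E, 0 ≤ x → K (n + 1) x ≤ K n x)
    (hweak : ∀ x : E, 0 ≤ x → ∀ φ : F →L[ℝ] ℝ, Tendsto (fun n => φ (K n x)) atTop (𝓝 0)) :
    ∀ x : E, Tendsto (fun n => ‖K n x‖) atTop (𝓝 0) := by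
  have key : ∀ x : E, 0 ≤ x → Tendsto (fun n => ‖K n x‖) atTop (𝓝 0) := fun x hx =>
    aux_dini (fun n => K n x) (fun n => hpos n x hx)
      (antitone_nat_of_succ_le fun n => hdec n x hx) (fun φ => hweak x hx φ)
  intro x
  have hpx := key x⁺ (posPart_nonneg x)
  have hnx := key x⁻ (negPart_nonneg x)
  have hbound : ∀ n, ‖K n x‖ ≤ ‖K n x⁺‖ + ‖K n x⁻‖ := by
    intro n
    have hx : K n x = K n x⁺ - K n x⁻ := by
      rw [← map_sub]; congr 1; exact (posPart_sub_negPart x).symm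
    rw [hx]
    exact norm_sub_le _ _
  have hsum : Tendsto (fun n => ‖K n x⁺‖ + ‖K n x⁻‖) atTop (𝓝 0) := by
    simpa using hpx.add hnx
  exact squeeze_zero (fun n => norm_nonneg _) hbound hsum
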